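/- Corollary 4.4, low distribution shift part. Let (Ω, ℙ) be a probability space and let x, y : Ω → ℝᵈ be measurable maps such that the matrix-valued functions ω ↦ x(ω)x(ω)ᵀ, ω ↦ x(ω)y(ω)ᵀ and ω ↦ y(ω)y(ω)ᵀ are Bochner integrable. Define Σ_cov := 𝔼[x xᵀ], Σ_cr := 𝔼[x yᵀ] and Σ_next := 𝔼[y yᵀ], and assume Σ_cov is positive definite. Let C ≥ 0 satisfy Σ_next ⪯ C·Σ_cov and let γ ∈ (0,1) satisfy γ·√C < 1. Then the matrix I − γ·Σ_cov^{−1/2}·Σ_cr·Σ_cov^{−1/2} is invertible and ‖(I − γ·Σ_cov^{−1/2}·Σ_cr·Σ_cov^{−1/2})⁻¹‖ ≤ 1/(1 − γ·√C). -/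

import Mathlib

open scoped Matrix.Norms.L2Operator
open Matrix MeasureTheory

/-- The square root of a positive semidefinite matrix, as defined in the older Mathlib
(removed since). -/
noncomputable def Matrix.PosSemidef.sqrt {n 𝕜 : Type*} [Fintype n] [DecidableEq n] [RCLike 𝕜]
    [PartialOrder 𝕜] [StarOrderedRing 𝕜] {A : Matrix n n 𝕜} (hA : A.PosSemidef) : Matrix n n 𝕜 :=
  (hA.1.eigenvectorUnitary : Matrix n n 𝕜) *
    diagonal (((↑) : ℝ → 𝕜) ∘ (√·) ∘ hA.1.eigenvalues) *
    (star hA.1.eigenvectorUnitary : Matrix n n 𝕜)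

lemma posSemidef_sqrt_mul_self_real {d : ℕ} {A : Matrix (Fin d) (Fin d) ℝ} (hA : A.PosSemidef) :
    hA.sqrt * hA.sqrt = A := by
  have hU : (star hA.1.eigenvectorUnitary : Matrix (Fin d) (Fin d) ℝ) *
      (hA.1.eigenvectorUnitary : Matrix (Fin d) (Fin d) ℝ) = 1 := Unitary.coe_star_mul_self _
  have hD : diagonal (((↑) : ℝ → ℝ) ∘ (√·) ∘ hA.1.eigenvalues) *
      diagonal (((↑) : ℝ → ℝ) ∘ (√·) ∘ hA.1.eigenvalues)
      = diagonal (RCLike.ofReal ∘ hA.1.eigenvalues) := by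
    rw [diagonal_mul_diagonal]
    congr 1
    funext i
    simp [Real.mul_self_sqrt (hA.eigenvalues_nonneg i)]
  conv_rhs => rw [hA.1.spectral_theorem, Unitary.conjStarAlgAut_apply]
  unfold Matrix.PosSemidef.sqrt
  calc _ = (hA.1.eigenvectorUnitary : Matrix (Fin d) (Fin d) ℝ) *
        diagonal (((↑) : ℝ → ℝ) ∘ (√·) ∘ hA.1.eigenvalues) *
        ((star hA.1.eigenvectorUnitary : Matrix (Fin d) (Fin d) ℝ) *
        (hA.1.eigenvectorUnitary : Matrix (Fin d) (Fin d) ℝ)) *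
        diagonal (((↑) : ℝ → ℝ) ∘ (√·) ∘ hA.1.eigenvalues) *
        (star hA.1.eigenvectorUnitary : Matrix (Fin d) (Fin d) ℝ) := by
          simp only [Matrix.mul_assoc]; rfl
    _ = _ := by
          rw [hU, Matrix.mul_one, Matrix.mul_assoc _ (diagonal _) (diagonal _), hD]

lemma posSemidef_sqrt_transpose_real {d : ℕ} {A : Matrix (Fin d) (Fin d) ℝ} (hA : A.PosSemidef) :
    (hA.sqrt)ᴴ = hA.sqrt := by
  unfold Matrix.PosSemidef.sqrt
  rw [Matrix.conjTranspose_mul, Matrix.conjTranspose_mul, Matrix.diagonal_conjTranspose]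
  simp [Matrix.mul_assoc, Matrix.star_eq_conjTranspose, Matrix.conjTranspose_eq_transpose_of_trivial]

lemma aux_amgm {p q z : ℝ} (hp : 0 ≤ p) (hq : 0 ≤ q)
    (h : ∀ t : ℝ, 0 < t → 2*z ≤ t*p + q/t) : z ≤ Real.sqrt p * Real.sqrt q := by
  refine le_of_forall_pos_le_add fun ε hε => ?_
  set sp := Real.sqrt p with hspdef
  set sq := Real.sqrt q with hsqdef
  have hsp : 0 ≤ sp := Real.sqrt_nonneg _
  have hsq : 0 ≤ sq := Real.sqrt_nonneg _
  have hp' : p = sp^2 := (Real.sq_sqrt hp).symm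
  have hq' : q = sq^2 := (Real.sq_sqrt hq).symm
  set ε0 := 2*ε/(sp+sq+1) with hε0def
  have hε0 : 0 < ε0 := by positivity
  have ht : 0 < (sq+ε0)/(sp+ε0) := by positivity
  have h0 := h _ ht
  have h1 : ((sq+ε0)/(sp+ε0)) * p ≤ sp*(sq+ε0) := by
    rw [div_mul_eq_mul_div, div_le_iff₀ (by positivity)]
    nlinarith [mul_nonneg (mul_nonneg hsp hε0.le) (add_nonneg hsq hε0.le)]
  have h2 : q / ((sq+ε0)/(sp+ε0)) ≤ sq*(sp+ε0) := by
    rw [div_div_eq_mul_div, div_le_iff₀ (by positivity)]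
    nlinarith [mul_nonneg (mul_nonneg hsq hε0.le) (add_nonneg hsp hε0.le)]
  have h3 : ε0 * (sp+sq) ≤ 2*ε := by
    rw [hε0def, div_mul_eq_mul_div, div_le_iff₀ (by positivity)]; nlinarith
  nlinarith

noncomputable def bilinF {d : ℕ} (a b : Fin d → ℝ) :
    Matrix (Fin d) (Fin d) ℝ →L[ℝ] ℝ :=
  LinearMap.toContinuousLinearMap
    { toFun := fun N => a ⬝ᵥ (N *ᵥ b)
      map_add' := fun M N => by simp [Matrix.add_mulVec, dotProduct_add]
      map_smul' := fun c N => by simp [Matrix.smul_mulVec, dotProduct_smul] }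

lemma bilinF_apply {d : ℕ} (a b : Fin d → ℝ) (N : Matrix (Fin d) (Fin d) ℝ) :
    bilinF a b N = a ⬝ᵥ (N *ᵥ b) := rfl

lemma bilinF_vecMulVec {d : ℕ} (a b p q : Fin d → ℝ) :
    bilinF a b (vecMulVec p q) = (a ⬝ᵥ p) * (b ⬝ᵥ q) := by
  rw [bilinF_apply]
  simp only [Matrix.mulVec, Matrix.vecMulVec_apply, dotProduct, Finset.mul_sum,
    Finset.sum_mul]
  rw [Finset.sum_comm]
  exact Finset.sum_congr rfl fun j _ => Finset.sum_congr rfl fun i _ => by ring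

lemma integral_bilin {Ω : Type*} [MeasurableSpace Ω] (Pr : Measure Ω) {d : ℕ}
    (a b : Fin d → ℝ) {f g : Ω → Fin d → ℝ}
    (hfg : Integrable (fun ω => vecMulVec (f ω) (g ω)) Pr) :
    Integrable (fun ω => (a ⬝ᵥ f ω) * (b ⬝ᵥ g ω)) Pr ∧
      ∫ ω, (a ⬝ᵥ f ω) * (b ⬝ᵥ g ω) ∂Pr
        = a ⬝ᵥ ((∫ ω, vecMulVec (f ω) (g ω) ∂Pr) *ᵥ b) := by
  constructor
  · have := (bilinF a b).integrable_comp hfg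
    simpa [Function.comp, bilinF_vecMulVec] using this
  · have := (bilinF a b).integral_comp_comm hfg
    simp only [bilinF_vecMulVec] at this
    rw [this, bilinF_apply]

lemma euclid_norm_eq {d : ℕ} (w : Fin d → ℝ) :
    ‖(WithLp.equiv 2 (Fin d → ℝ)).symm w‖ = Real.sqrt (w ⬝ᵥ w) := by
  rw [EuclideanSpace.norm_eq]
  congr 1
  simp only [dotProduct, WithLp.equiv_symm_apply, PiLp.toLp_apply, Real.norm_eq_abs, sq_abs]
  exact Finset.sum_congr rfl fun i _ => (sq (w i)) ▸ (pow_two (w i)).symm ▸ rfl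

lemma opnorm_le_of_bilin {d : ℕ} (M : Matrix (Fin d) (Fin d) ℝ) {c : ℝ} (hc : 0 ≤ c)
    (h : ∀ u v : Fin d → ℝ, u ⬝ᵥ (M *ᵥ v) ≤ c * (Real.sqrt (u ⬝ᵥ u) * Real.sqrt (v ⬝ᵥ v))) :
    ‖M‖ ≤ c := by
  rw [Matrix.l2_opNorm_def]
  refine ContinuousLinearMap.opNorm_le_bound _ hc fun v => ?_
  set w : Fin d → ℝ := M *ᵥ (WithLp.equiv 2 (Fin d → ℝ)) v with hw
  have happ : (Matrix.toEuclideanLin.trans LinearMap.toContinuousLinearMap M) v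
      = (WithLp.equiv 2 (Fin d → ℝ)).symm w := rfl
  rw [happ, euclid_norm_eq]
  have hv : ‖v‖ = Real.sqrt ((WithLp.equiv 2 (Fin d → ℝ)) v ⬝ᵥ (WithLp.equiv 2 (Fin d → ℝ)) v) := by
    rw [← euclid_norm_eq]; rfl
  have h1 := h w ((WithLp.equiv 2 (Fin d → ℝ)) v)
  rw [← hw] at h1
  have hww : 0 ≤ w ⬝ᵥ w :=
    Finset.sum_nonneg fun i _ => mul_self_nonneg (w i)
  have h2 : w ⬝ᵥ w = Real.sqrt (w ⬝ᵥ w) * Real.sqrt (w ⬝ᵥ w) :=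
    (Real.mul_self_sqrt hww).symm
  rw [hv]
  set s := Real.sqrt (w ⬝ᵥ w) with hs
  set t := Real.sqrt ((WithLp.equiv 2 (Fin d → ℝ)) v ⬝ᵥ (WithLp.equiv 2 (Fin d → ℝ)) v) with hts
  have hs0 : 0 ≤ s := Real.sqrt_nonneg _
  have ht0 : 0 ≤ t := Real.sqrt_nonneg _
  rcases hs0.eq_or_lt with h0 | h0
  · rw [← h0]; exact mul_nonneg hc ht0
  · have : s * s ≤ (c * t) * s := by nlinarith
    exact le_of_mul_le_mul_right this h0

/-- Corollary 4.4, low distribution shift part: if `Snext ⪯ C·Scov` and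
`γ·√C < 1` then `I − γ·Scov^{-1/2}·Scr·Scov^{-1/2}` is invertible with inverse
of operator norm at most `1/(1 − γ√C)`. -/
theorem stmt_4 {Ω : Type*} [MeasurableSpace Ω] (Pr : Measure Ω) [IsProbabilityMeasure Pr]
    (d : ℕ) (x y : Ω → Fin d → ℝ) (hx : Measurable x) (hy : Measurable y)
    (hxx : Integrable (fun ω => vecMulVec (x ω) (x ω)) Pr)
    (hxy : Integrable (fun ω => vecMulVec (x ω) (y ω)) Pr)
    (hyy : Integrable (fun ω => vecMulVec (y ω) (y ω)) Pr)
    (Scov Scr Snext : Matrix (Fin d) (Fin d) ℝ)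
    (hScov : Scov = ∫ ω, vecMulVec (x ω) (x ω) ∂Pr)
    (hScr : Scr = ∫ ω, vecMulVec (x ω) (y ω) ∂Pr)
    (hSnext : Snext = ∫ ω, vecMulVec (y ω) (y ω) ∂Pr)
    (hcov : Scov.PosDef)
    (C : ℝ) (hC : 0 ≤ C) (hshift : (C • Scov - Snext).PosSemidef)
    (γ : ℝ) (hγ0 : 0 < γ) (hγ1 : γ < 1) (hstab : γ * Real.sqrt C < 1) :
    IsUnit (1 - γ • (hcov.posSemidef.sqrt⁻¹ * Scr * hcov.posSemidef.sqrt⁻¹)).det ∧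
      ‖(1 - γ • (hcov.posSemidef.sqrt⁻¹ * Scr * hcov.posSemidef.sqrt⁻¹))⁻¹‖ ≤
        1 / (1 - γ * Real.sqrt C) := by
  set S := hcov.posSemidef.sqrt with hSdef
  set A := S⁻¹ with hAdef
  set M := A * Scr * A with hMdef
  -- basic facts about `S` and `A`
  have hSS : S * S = Scov := posSemidef_sqrt_mul_self_real hcov.posSemidef
  have hdet : IsUnit S.det := by
    have h1 : S.det * S.det = Scov.det := by rw [← Matrix.det_mul, hSS]
    have h2 : 0 < Scov.det := hcov.det_pos
    refine isUnit_iff_ne_zero.mpr fun h => ?_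
    rw [h, mul_zero] at h1; rw [← h1] at h2; exact lt_irrefl _ h2
  have hA1 : A * Scov * A = 1 := by
    calc A * Scov * A = A * (S * S) * A := by rw [hSS]
      _ = (A * S) * (S * A) := by simp only [mul_assoc]
      _ = 1 := by rw [hAdef, Matrix.nonsing_inv_mul _ hdet, Matrix.mul_nonsing_inv _ hdet, one_mul]
  have hAt : Aᵀ = A := by
    have h := (IsHermitian.inv (posSemidef_sqrt_transpose_real hcov.posSemidef) : (S⁻¹).IsHermitian)
    rwa [Matrix.IsHermitian, Matrix.conjTranspose_eq_transpose_of_trivial] at h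
  have hvm : ∀ u : Fin d → ℝ, u ᵥ* A = A *ᵥ u := fun u => by
    conv_lhs => rw [← hAt]
    exact Matrix.vecMul_transpose A u
  have key : ∀ (N : Matrix (Fin d) (Fin d) ℝ) (u v : Fin d → ℝ),
      (A *ᵥ u) ⬝ᵥ (N *ᵥ (A *ᵥ v)) = u ⬝ᵥ ((A * N * A) *ᵥ v) := by
    intro N u v
    have hm : (A * N * A) *ᵥ v = A *ᵥ (N *ᵥ (A *ᵥ v)) := by
      rw [← Matrix.mulVec_mulVec, ← Matrix.mulVec_mulVec]
    rw [hm, Matrix.dotProduct_mulVec u, hvm u]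
  -- the bilinear bound
  have hbilin : ∀ u v : Fin d → ℝ,
      u ⬝ᵥ (M *ᵥ v) ≤ Real.sqrt C * (Real.sqrt (u ⬝ᵥ u) * Real.sqrt (v ⬝ᵥ v)) := by
    intro u v
    set a := A *ᵥ u with hadef
    set b := A *ᵥ v with hbdef
    obtain ⟨hg2i, hg2⟩ := integral_bilin Pr a a hxx
    obtain ⟨hghi, hgh⟩ := integral_bilin Pr a b hxy
    obtain ⟨hh2i, hh2⟩ := integral_bilin Pr b b hyy
    rw [← hScov] at hg2
    rw [← hScr] at hgh
    rw [← hSnext] at hh2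
    have hP : ∫ ω, (a ⬝ᵥ x ω) * (a ⬝ᵥ x ω) ∂Pr = u ⬝ᵥ u := by
      rw [hg2, hadef, key, hA1, Matrix.one_mulVec]
    have hZ : ∫ ω, (a ⬝ᵥ x ω) * (b ⬝ᵥ y ω) ∂Pr = u ⬝ᵥ (M *ᵥ v) := by
      rw [hgh, hadef, hbdef, key]
    have hbScov : b ⬝ᵥ (Scov *ᵥ b) = v ⬝ᵥ v := by
      rw [hbdef, key, hA1, Matrix.one_mulVec]
    have hQle : ∫ ω, (b ⬝ᵥ y ω) * (b ⬝ᵥ y ω) ∂Pr ≤ C * (v ⬝ᵥ v) := by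
      have h0 := hshift.dotProduct_mulVec_nonneg b
      simp only [Matrix.sub_mulVec, Matrix.smul_mulVec, dotProduct_sub,
        dotProduct_smul, smul_eq_mul, star_trivial] at h0
      rw [hh2]
      rw [hbScov] at h0
      linarith
    have hQ0 : 0 ≤ ∫ ω, (b ⬝ᵥ y ω) * (b ⬝ᵥ y ω) ∂Pr :=
      integral_nonneg fun ω => mul_self_nonneg _
    have hP0 : 0 ≤ ∫ ω, (a ⬝ᵥ x ω) * (a ⬝ᵥ x ω) ∂Pr :=
      integral_nonneg fun ω => mul_self_nonneg _
    have hpt : ∀ t : ℝ, 0 < t →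
        2 * (∫ ω, (a ⬝ᵥ x ω) * (b ⬝ᵥ y ω) ∂Pr)
          ≤ t * (∫ ω, (a ⬝ᵥ x ω) * (a ⬝ᵥ x ω) ∂Pr)
            + (∫ ω, (b ⬝ᵥ y ω) * (b ⬝ᵥ y ω) ∂Pr) / t := by
      intro t ht
      have hexp : (fun ω => (t * (a ⬝ᵥ x ω) - (b ⬝ᵥ y ω))^2)
          = fun ω => (t^2 * ((a ⬝ᵥ x ω) * (a ⬝ᵥ x ω)) - 2*t * ((a ⬝ᵥ x ω) * (b ⬝ᵥ y ω)))
            + (b ⬝ᵥ y ω) * (b ⬝ᵥ y ω) := funext fun ω => by ring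
      have hnn : 0 ≤ ∫ ω, (t * (a ⬝ᵥ x ω) - (b ⬝ᵥ y ω))^2 ∂Pr :=
        integral_nonneg fun ω => sq_nonneg _
      have hi1 : Integrable (fun ω => t ^ 2 * ((a ⬝ᵥ x ω) * (a ⬝ᵥ x ω))) Pr :=
        hg2i.const_mul (t^2)
      have hi2 : Integrable (fun ω => 2 * t * ((a ⬝ᵥ x ω) * (b ⬝ᵥ y ω))) Pr :=
        hghi.const_mul (2*t)
      have hi12 : Integrable (fun ω => t ^ 2 * ((a ⬝ᵥ x ω) * (a ⬝ᵥ x ω))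
          - 2 * t * ((a ⬝ᵥ x ω) * (b ⬝ᵥ y ω))) Pr := hi1.sub hi2
      rw [hexp, integral_add hi12 hh2i, integral_sub hi1 hi2,
        integral_const_mul, integral_const_mul] at hnn
      set P := ∫ ω, (a ⬝ᵥ x ω) * (a ⬝ᵥ x ω) ∂Pr
      set Z := ∫ ω, (a ⬝ᵥ x ω) * (b ⬝ᵥ y ω) ∂Pr
      set Q := ∫ ω, (b ⬝ᵥ y ω) * (b ⬝ᵥ y ω) ∂Pr
      have h5 : (2*t*Z) * t⁻¹ ≤ (t^2*P + Q) * t⁻¹ := by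
        apply mul_le_mul_of_nonneg_right _ (by positivity)
        nlinarith
      calc 2*Z = (2*t*Z)*t⁻¹ := by field_simp
        _ ≤ (t^2*P + Q) * t⁻¹ := h5
        _ = t*P + Q/t := by field_simp
    have hfin := aux_amgm hP0 hQ0 hpt
    rw [hZ, hP] at hfin
    calc u ⬝ᵥ (M *ᵥ v)
        ≤ Real.sqrt (u ⬝ᵥ u) * Real.sqrt (∫ ω, (b ⬝ᵥ y ω) * (b ⬝ᵥ y ω) ∂Pr) := hfin
      _ ≤ Real.sqrt (u ⬝ᵥ u) * Real.sqrt (C * (v ⬝ᵥ v)) :=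
          mul_le_mul_of_nonneg_left (Real.sqrt_le_sqrt hQle) (Real.sqrt_nonneg _)
      _ = Real.sqrt C * (Real.sqrt (u ⬝ᵥ u) * Real.sqrt (v ⬝ᵥ v)) := by
          rw [Real.sqrt_mul hC]; ring
  have hMnorm : ‖M‖ ≤ Real.sqrt C := opnorm_le_of_bilin M (Real.sqrt_nonneg C) hbilin
  set T := γ • M with hTdef
  have hTnorm : ‖T‖ ≤ γ * Real.sqrt C := by
    rw [hTdef, norm_smul, Real.norm_eq_abs, abs_of_pos hγ0]
    exact mul_le_mul_of_nonneg_left hMnorm hγ0.le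
  have hT1 : ‖T‖ < 1 := lt_of_le_of_lt hTnorm hstab
  have hUnit : IsUnit (1 - T) := isUnit_one_sub_of_norm_lt_one hT1
  refine ⟨(Matrix.isUnit_iff_isUnit_det _).mp hUnit, ?_⟩
  have hone : ‖(1 : Matrix (Fin d) (Fin d) ℝ)‖ ≤ 1 := by
    have h := Matrix.l2_opNorm_conjTranspose_mul_self (1 : Matrix (Fin d) (Fin d) ℝ)
    rw [Matrix.conjTranspose_one, one_mul] at h
    nlinarith [norm_nonneg (1 : Matrix (Fin d) (Fin d) ℝ),
      mul_self_nonneg (‖(1 : Matrix (Fin d) (Fin d) ℝ)‖ - 1)]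
  have hb := tsum_geometric_le_of_norm_lt_one T hT1
  have hinv : (1 - ‖T‖)⁻¹ ≤ (1 - γ * Real.sqrt C)⁻¹ :=
    inv_anti₀ (by linarith) (by linarith)
  rw [Matrix.nonsing_inv_eq_ringInverse, ← geom_series_eq_inverse T hT1, one_div]
  linarith
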